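/- On each interval [r_{i−}, r_i] between consecutive score boundaries, the loss L(T̃_{r_{i−}+k}) equals L(T̃_{r_{i−}}) + k(1 − 2S(C_i)), where C_i is the cell of mass accepted between thresholds r_{i−} and r_i and S(C_i) is its score; in particular the slope of r ↦ L(T̃_r) on that interval is 1 − 2S(C_i). -/
import Mathlib


open Finset

/-- `P` is a probability distribution on `X × Z × Y` with `Z = Bool` (group, `true` = A,
`false` = D) and `Y = Bool` (label, `true` = 1). -/
def IsDist {X : Type*} [Fintype X] (P : X × Bool × Bool → ℝ) : Prop :=
  (∀ p, 0 ≤ P p) ∧ ∑ p : X × Bool × Bool, P p = 1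

/-- mass of the feature-group cell `(x, z)`. -/
noncomputable def cellMass {X : Type*} (P : X × Bool × Bool → ℝ) (x : X) (z : Bool) : ℝ :=
  P (x, z, false) + P (x, z, true)

/-- total mass of group `z`. -/
noncomputable def gMass {X : Type*} [Fintype X] (P : X × Bool × Bool → ℝ) (z : Bool) : ℝ :=
  ∑ x, cellMass P x z

/-- score of the cell `(x, z)`: `Pr[Y = 1 | X = x, Z = z]`. -/
noncomputable def score {X : Type*} (P : X × Bool × Bool → ℝ) (x : X) (z : Bool) : ℝ :=
  P (x, z, true) / cellMass P x z

/-- A randomized classifier takes values in `[0,1]`. -/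
def InUnit {X : Type*} (f : X × Bool → ℝ) : Prop := ∀ p, f p ∈ Set.Icc (0 : ℝ) 1

/-- selection rate of randomized classifier `f` on group `z`: `E[f(X,Z) | Z = z]`. -/
noncomputable def selRate {X : Type*} [Fintype X] (P : X × Bool × Bool → ℝ) (f : X × Bool → ℝ)
    (z : Bool) : ℝ :=
  (∑ x, f (x, z) * cellMass P x z) / gMass P z

/-- 0-1 loss of randomized classifier `f` under `P`. -/
noncomputable def loss {X : Type*} [Fintype X] (P : X × Bool × Bool → ℝ) (f : X × Bool → ℝ) : ℝ :=
  ∑ x, ∑ z, (P (x, z, true) * (1 - f (x, z)) + P (x, z, false) * f (x, z))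

/-- Demographic parity: equal selection rates on the two groups. -/
def DP {X : Type*} [Fintype X] (P : X × Bool × Bool → ℝ) (f : X × Bool → ℝ) : Prop :=
  selRate P f true = selRate P f false

/-- false positive rate of `f` on group `z`: `E[f(X,Z) | Y = 0, Z = z]`. -/
noncomputable def fpr {X : Type*} [Fintype X] (P : X × Bool × Bool → ℝ) (f : X × Bool → ℝ)
    (z : Bool) : ℝ :=
  (∑ x, f (x, z) * P (x, z, false)) / (∑ x, P (x, z, false))

/-- `f` is a (group-wise) mass-threshold classifier: within each group it accepts a
prefix of the cells sorted in decreasing order of score (fractionally at the boundary). -/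
def IsPrefix {X : Type*} (P : X × Bool × Bool → ℝ) (f : X × Bool → ℝ) : Prop :=
  ∀ z x x', 0 < cellMass P x z → 0 < cellMass P x' z →
    score P x' z < score P x z → 0 < f (x', z) → f (x, z) = 1

/-- cells of equal score within a group have been merged, i.e. scores of distinct
positive-mass cells within a group are distinct ("strictly decreasing" when sorted). -/
def MergedScores {X : Type*} (P : X × Bool × Bool → ℝ) : Prop :=
  ∀ z x x', 0 < cellMass P x z → 0 < cellMass P x' z → score P x z = score P x' z → x = x'

/-- On any interval of thresholds, if `f₁, f₂` are nested mass-threshold classifiers of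
selection rates `r` and `r + k`, and `S` is the score of the cell of mass accepted by
`f₂` but not `f₁`, then `L(T̃_{r+k}) = L(T̃_r) + k (1 - 2 S)`; in particular the slope
of `r ↦ L(T̃_r)` between consecutive score boundaries is `1 - 2 S(Cᵢ)`. -/
theorem stmt5 {X : Type*} [Fintype X] (P : X × Bool × Bool → ℝ) (hP : IsDist P)
    (hg : ∀ z, 0 < gMass P z) (r k : ℝ) (hr : 0 ≤ r) (hk : 0 < k) (hrk : r + k ≤ 1)
    (f₁ f₂ : X × Bool → ℝ)
    (h₁u : InUnit f₁) (h₁p : IsPrefix P f₁) (h₁r : ∀ z, selRate P f₁ z = r)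
    (h₂u : InUnit f₂) (h₂p : IsPrefix P f₂) (h₂r : ∀ z, selRate P f₂ z = r + k)
    (hle : ∀ p, f₁ p ≤ f₂ p)
    (S : ℝ)
    (hS : S = (∑ x, ∑ z, (f₂ (x, z) - f₁ (x, z)) * P (x, z, true)) /
              (∑ x, ∑ z, (f₂ (x, z) - f₁ (x, z)) * cellMass P x z)) :
    loss P f₂ = loss P f₁ + k * (1 - 2 * S) := by
  -- total mass in groups
  have htot : gMass P true + gMass P false = 1 := by
    have h := hP.2
    rw [Fintype.sum_prod_type] at h
    simp only [Fintype.sum_prod_type, Fintype.sum_bool] at h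
    simp only [gMass, cellMass]
    rw [← h, ← Finset.sum_add_distrib]
    apply Finset.sum_congr rfl; intro x _; ring
  -- per-group sums
  have hsel : ∀ (f : X × Bool → ℝ) z, ∑ x, f (x, z) * cellMass P x z
      = selRate P f z * gMass P z := by
    intro f z
    rw [selRate, div_mul_cancel₀]
    exact (hg z).ne'
  have hM : ∑ x, ∑ z, (f₂ (x, z) - f₁ (x, z)) * cellMass P x z = k := by
    rw [Finset.sum_comm]
    have : ∀ z, ∑ x, (f₂ (x, z) - f₁ (x, z)) * cellMass P x z = k * gMass P z := by
      intro z
      have : ∑ x, (f₂ (x, z) - f₁ (x, z)) * cellMass P x z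
          = (∑ x, f₂ (x, z) * cellMass P x z) - ∑ x, f₁ (x, z) * cellMass P x z := by
        rw [← Finset.sum_sub_distrib]
        apply Finset.sum_congr rfl; intro x _; ring
      rw [this, hsel, hsel, h₁r, h₂r]; ring
    simp only [Fintype.sum_bool, this]
    rw [← mul_add, htot, mul_one]
  have hT : ∑ x, ∑ z, (f₂ (x, z) - f₁ (x, z)) * P (x, z, true) = S * k := by
    rw [hS, hM, div_mul_cancel₀ _ hk.ne']
  have hdiff : loss P f₂ - loss P f₁
      = (∑ x, ∑ z, (f₂ (x, z) - f₁ (x, z)) * cellMass P x z)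
        - 2 * ∑ x, ∑ z, (f₂ (x, z) - f₁ (x, z)) * P (x, z, true) := by
    simp only [loss, cellMass, ← Finset.sum_sub_distrib, Finset.mul_sum, ← Finset.sum_add_distrib]
    apply Finset.sum_congr rfl; intro x _
    apply Finset.sum_congr rfl; intro z _; ring
  have := hdiff
  rw [hM, hT] at this
  linarith
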